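/- Let h ∈ E_σ and l ∈ ℝ such that h(x) = O(|x|^l) as |x| → ∞ on ℝ \ (−1,1). Then f̃_h(x) = O(|x|^{l−1}). -/

import Mathlib

open MeasureTheory

/-- Density of `N(0,σ²)`. -/
noncomputable def gaussDens (σ x : ℝ) : ℝ :=
  (1 / (σ * Real.sqrt (2 * Real.pi))) * Real.exp (-x ^ 2 / (2 * σ ^ 2))

/-- `h ∈ E_σ`: Borel functions on `ℝ \ (−1,1)` integrable against `P·φ_σ` for
every polynomial `P`. -/
def memEsig (σ : ℝ) (h : ℝ → ℝ) : Prop :=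
  Measurable h ∧ ∀ P : Polynomial ℝ,
    IntegrableOn (fun x => |h x * P.eval x| * gaussDens σ x) {x : ℝ | 1 ≤ |x|}

/-- The solution `f̃_h` of the modified Stein equation:
`f̃_h(x) = (1/(σ²φ_σ(x))) ∫_x^∞ h φ_σ` for `x ≥ 1` and
`f̃_h(x) = (1/(σ²φ_σ(x))) ∫_{−∞}^x h φ_σ` for `x ≤ −1`. -/
noncomputable def tildeF (σ : ℝ) (h : ℝ → ℝ) (x : ℝ) : ℝ :=
  if 0 ≤ x then (1 / (σ ^ 2 * gaussDens σ x)) * ∫ t in Set.Ioi x, h t * gaussDens σ t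
  else (1 / (σ ^ 2 * gaussDens σ x)) * ∫ t in Set.Iio x, h t * gaussDens σ t

lemma gauss_pos {σ : ℝ} (hσ : 0 < σ) (x : ℝ) : 0 < gaussDens σ x := by
  unfold gaussDens
  have := Real.pi_pos
  positivity

lemma gauss_even (σ t : ℝ) : gaussDens σ (-t) = gaussDens σ t := by
  simp [gaussDens, neg_sq]

lemma gauss_cont (σ : ℝ) : Continuous (gaussDens σ) := by
  unfold gaussDens; continuity

lemma ptwise {σ l x t : ℝ} (hσ : 0 < σ) (hx : 0 < x) (hxt : x ≤ t)
    (h2 : 2 * σ ^ 2 * |l - 1| ≤ x ^ 2) :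
    t ^ l * Real.exp (-t ^ 2 / (2 * σ ^ 2)) ≤
      x ^ (l - 1) * (t * Real.exp (-(t ^ 2 + x ^ 2) / (4 * σ ^ 2))) := by
  have ht : 0 < t := hx.trans_le hxt
  have key : (l - 1) * (Real.log t - Real.log x) ≤ (t ^ 2 - x ^ 2) / (4 * σ ^ 2) := by
    have hlog0 : 0 ≤ Real.log t - Real.log x := sub_nonneg.mpr (Real.log_le_log hx hxt)
    have h1 : Real.log t - Real.log x ≤ (t - x) / x := by
      rw [← Real.log_div ht.ne' hx.ne']
      have h := Real.log_le_sub_one_of_pos (div_pos ht hx)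
      have : (t - x) / x = t / x - 1 := by field_simp
      linarith [this ▸ h, h, this.ge]
    calc (l - 1) * (Real.log t - Real.log x)
        ≤ |l - 1| * (Real.log t - Real.log x) :=
          mul_le_mul_of_nonneg_right (le_abs_self _) hlog0
      _ ≤ |l - 1| * ((t - x) / x) := mul_le_mul_of_nonneg_left h1 (abs_nonneg _)
      _ ≤ (t ^ 2 - x ^ 2) / (4 * σ ^ 2) := by
          rw [mul_div_assoc', div_le_div_iff₀ hx (by positivity)]
          nlinarith [mul_le_mul_of_nonneg_right h2 (sub_nonneg.2 hxt),
            mul_nonneg (mul_nonneg hx.le (sub_nonneg.2 hxt)) (sub_nonneg.2 hxt)]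
  have hL : t ^ l * Real.exp (-t ^ 2 / (2 * σ ^ 2)) =
      Real.exp (Real.log t * l + -t ^ 2 / (2 * σ ^ 2)) := by
    rw [Real.rpow_def_of_pos ht, ← Real.exp_add]
  have hR : x ^ (l - 1) * (t * Real.exp (-(t ^ 2 + x ^ 2) / (4 * σ ^ 2))) =
      Real.exp (Real.log x * (l - 1) + (Real.log t + -(t ^ 2 + x ^ 2) / (4 * σ ^ 2))) := by
    rw [Real.rpow_def_of_pos hx, Real.exp_add, Real.exp_add, Real.exp_log ht]
  rw [hL, hR]
  apply Real.exp_le_exp.mpr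
  have e1 : -t ^ 2 / (2 * σ ^ 2) =
      -(t ^ 2 + x ^ 2) / (4 * σ ^ 2) - (t ^ 2 - x ^ 2) / (4 * σ ^ 2) := by
    field_simp; ring
  nlinarith [key]

open Filter in
lemma keyInt {σ : ℝ} (hσ : 0 < σ) (y : ℝ) :
    ∫ t in Set.Ioi y, t * Real.exp (-(t ^ 2 + y ^ 2) / (4 * σ ^ 2)) =
      2 * σ ^ 2 * Real.exp (-y ^ 2 / (2 * σ ^ 2)) := by
  set b : ℝ := 1 / (4 * σ ^ 2) with hbdef
  have hb : 0 < b := by positivity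
  have e : ∀ t : ℝ, t * Real.exp (-(t ^ 2 + y ^ 2) / (4 * σ ^ 2)) =
      (t * Real.exp (-b * t ^ 2)) * Real.exp (-b * y ^ 2) := by
    intro t
    rw [mul_assoc, ← Real.exp_add]
    congr 1
    rw [hbdef]; field_simp; ring
  simp_rw [e]
  rw [integral_mul_const]
  have hd : ∀ t : ℝ, HasDerivAt (fun u : ℝ => -(2 * b)⁻¹ * Real.exp (-b * u ^ 2))
      (t * Real.exp (-b * t ^ 2)) t := by
    intro t
    have h1 : HasDerivAt (fun u : ℝ => -b * u ^ 2) (-b * (2 * t)) t := by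
      simpa [mul_comm] using (hasDerivAt_pow 2 t).const_mul (-b)
    have h2 := (Real.hasDerivAt_exp (-b * t ^ 2)).comp t h1
    have h3 := h2.const_mul (-(2 * b)⁻¹)
    refine h3.congr_deriv ?_
    field_simp [hb.ne']
  have htend : Tendsto (fun u : ℝ => -(2 * b)⁻¹ * Real.exp (-b * u ^ 2)) atTop (nhds 0) := by
    rw [show (0 : ℝ) = -(2 * b)⁻¹ * 0 by ring]
    apply Filter.Tendsto.const_mul
    apply Real.tendsto_exp_atBot.comp
    have h4 : Tendsto (fun u : ℝ => b * u ^ 2) atTop atTop :=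
      (tendsto_pow_atTop (by norm_num)).const_mul_atTop hb
    simpa [neg_mul] using tendsto_neg_atBot_iff.mpr h4
  rw [MeasureTheory.integral_Ioi_of_hasDerivAt_of_tendsto' (fun t _ => hd t)
    ((integrable_mul_exp_neg_mul_sq hb).integrableOn) htend]
  have h2b : (2 * b)⁻¹ = 2 * σ ^ 2 := by rw [hbdef]; field_simp; ring
  have h2e : -b * y ^ 2 + -b * y ^ 2 = -y ^ 2 / (2 * σ ^ 2) := by rw [hbdef]; field_simp; ring
  rw [show (0 : ℝ) - -(2 * b)⁻¹ * Real.exp (-b * y ^ 2) = (2 * b)⁻¹ * Real.exp (-b * y ^ 2) by ring,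
    h2b, mul_assoc, ← Real.exp_add, h2e]

lemma keyBound {σ : ℝ} (hσ : 0 < σ) {C₀ l y : ℝ} (hC₀ : 0 ≤ C₀) (hy : 1 ≤ y)
    (hy2 : 2 * σ ^ 2 * |l - 1| ≤ y ^ 2) {H : ℝ → ℝ} (hH : Measurable H)
    (hb : ∀ t, y ≤ t → |H t| ≤ C₀ * t ^ l) :
    |∫ t in Set.Ioi y, H t * gaussDens σ t| ≤
      2 * σ ^ 2 * C₀ * (y ^ (l - 1) * gaussDens σ y) := by
  have hy0 : 0 < y := lt_of_lt_of_le one_pos hy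
  set c : ℝ := 1 / (σ * Real.sqrt (2 * Real.pi)) with hcdef
  have hc : 0 < c := by
    have := Real.pi_pos
    rw [hcdef]; positivity
  set g : ℝ → ℝ := fun t =>
    (C₀ * c * y ^ (l - 1)) * (t * Real.exp (-(t ^ 2 + y ^ 2) / (4 * σ ^ 2))) with hgdef
  have hgint : IntegrableOn g (Set.Ioi y) := by
    have hb4 : (0 : ℝ) < 1 / (4 * σ ^ 2) := by positivity
    have h1 : Integrable (fun t : ℝ => t * Real.exp (-(1 / (4 * σ ^ 2)) * t ^ 2)) :=
      integrable_mul_exp_neg_mul_sq hb4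
    have hge : g = fun t => (C₀ * c * y ^ (l - 1) * Real.exp (-(1 / (4 * σ ^ 2)) * y ^ 2)) *
        (t * Real.exp (-(1 / (4 * σ ^ 2)) * t ^ 2)) := by
      funext t
      have he : Real.exp (-(t ^ 2 + y ^ 2) / (4 * σ ^ 2)) =
          Real.exp (-(1 / (4 * σ ^ 2)) * t ^ 2) * Real.exp (-(1 / (4 * σ ^ 2)) * y ^ 2) := by
        rw [← Real.exp_add]; congr 1; field_simp; ring
      simp only [hgdef]
      rw [he]; ring
    rw [hge]
    exact (h1.const_mul _).integrableOn
  have hptb : ∀ᵐ t ∂(volume.restrict (Set.Ioi y)), ‖H t * gaussDens σ t‖ ≤ g t := by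
    rw [ae_restrict_iff' measurableSet_Ioi]
    refine Filter.Eventually.of_forall fun t ht => ?_
    have hyt : y ≤ t := le_of_lt ht
    have ht0 : 0 < t := hy0.trans_le hyt
    have hgt : gaussDens σ t = c * Real.exp (-t ^ 2 / (2 * σ ^ 2)) := rfl
    rw [Real.norm_eq_abs, abs_mul, abs_of_pos (gauss_pos hσ t)]
    calc |H t| * gaussDens σ t ≤ (C₀ * t ^ l) * gaussDens σ t :=
          mul_le_mul_of_nonneg_right (hb t hyt) (gauss_pos hσ t).le
      _ = (C₀ * c) * (t ^ l * Real.exp (-t ^ 2 / (2 * σ ^ 2))) := by rw [hgt]; ring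
      _ ≤ (C₀ * c) * (y ^ (l - 1) * (t * Real.exp (-(t ^ 2 + y ^ 2) / (4 * σ ^ 2)))) :=
          mul_le_mul_of_nonneg_left (ptwise hσ hy0 hyt hy2) (by positivity)
      _ = g t := by rw [hgdef]; ring
  have hnorm := norm_integral_le_of_norm_le hgint hptb
  rw [Real.norm_eq_abs] at hnorm
  calc |∫ t in Set.Ioi y, H t * gaussDens σ t| ≤ ∫ t in Set.Ioi y, g t := hnorm
    _ = (C₀ * c * y ^ (l - 1)) *
        ∫ t in Set.Ioi y, t * Real.exp (-(t ^ 2 + y ^ 2) / (4 * σ ^ 2)) := by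
        rw [hgdef, integral_const_mul]
    _ = (C₀ * c * y ^ (l - 1)) * (2 * σ ^ 2 * Real.exp (-y ^ 2 / (2 * σ ^ 2))) := by
        rw [keyInt hσ y]
    _ = 2 * σ ^ 2 * C₀ * (y ^ (l - 1) * gaussDens σ y) := by
        show _ = 2 * σ ^ 2 * C₀ * (y ^ (l - 1) * (c * Real.exp (-y ^ 2 / (2 * σ ^ 2))))
        ring

/-- If `h ∈ E_σ` and `h(x) = O(|x|^l)` as `|x| → ∞` on `ℝ \ (−1,1)`, then
`f̃_h(x) = O(|x|^{l−1})`. -/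
theorem stmt_18 (σ : ℝ) (hσ : 0 < σ) (h : ℝ → ℝ) (hh : memEsig σ h) (l : ℝ)
    (hO : ∃ C R : ℝ, 1 ≤ R ∧ ∀ x : ℝ, R ≤ |x| → |h x| ≤ C * |x| ^ l) :
    ∃ C R : ℝ, 1 ≤ R ∧ ∀ x : ℝ, R ≤ |x| → |tildeF σ h x| ≤ C * |x| ^ (l - 1) := by
  obtain ⟨hmeas, -⟩ := hh
  obtain ⟨C, R₀, hR₀, hCb⟩ := hO
  set C₀ : ℝ := max C 0 with hC₀def
  have hC₀ : 0 ≤ C₀ := le_max_right _ _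
  have hCC₀ : C ≤ C₀ := le_max_left _ _
  refine ⟨2 * C₀, max R₀ (1 + 2 * σ ^ 2 * |l - 1|),
    le_trans hR₀ (le_max_left _ _), fun x hx => ?_⟩
  have hy1 : 1 ≤ |x| := le_trans (le_trans hR₀ (le_max_left _ _)) hx
  have hyR : R₀ ≤ |x| := le_trans (le_max_left _ _) hx
  have hy2 : 2 * σ ^ 2 * |l - 1| ≤ |x| ^ 2 := by
    have h1 : 1 + 2 * σ ^ 2 * |l - 1| ≤ |x| := le_trans (le_max_right _ _) hx
    nlinarith [mul_nonneg (sub_nonneg.2 hy1) (abs_nonneg x)]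
  have halg : ∀ y : ℝ, 0 < y → 1 / (σ ^ 2 * gaussDens σ y) *
      (2 * σ ^ 2 * C₀ * (y ^ (l - 1) * gaussDens σ y)) = 2 * C₀ * y ^ (l - 1) := by
    intro y hy
    have hg := gauss_pos hσ y
    field_simp
  rcases le_or_gt 0 x with hx0 | hx0
  · -- x ≥ 0, so x ≥ 1
    have hxx : |x| = x := abs_of_nonneg hx0
    rw [hxx] at hy1 hyR hy2 ⊢
    have hpos : 0 < x := lt_of_lt_of_le one_pos hy1
    have hbnd : ∀ t, x ≤ t → |h t| ≤ C₀ * t ^ l := by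
      intro t ht
      have ht0 : 0 < t := hpos.trans_le ht
      have htt : |t| = t := abs_of_pos ht0
      have := hCb t (by rw [htt]; exact hyR.trans ht)
      rw [htt] at this
      exact this.trans (mul_le_mul_of_nonneg_right hCC₀ (Real.rpow_nonneg ht0.le l))
    have hKey := keyBound hσ hC₀ hy1 hy2 hmeas hbnd
    unfold tildeF
    rw [if_pos hx0, abs_mul, abs_of_pos
      (show (0:ℝ) < 1 / (σ ^ 2 * gaussDens σ x) by
        have := gauss_pos hσ x; positivity)]
    calc 1 / (σ ^ 2 * gaussDens σ x) * |∫ t in Set.Ioi x, h t * gaussDens σ t|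
        ≤ 1 / (σ ^ 2 * gaussDens σ x) * (2 * σ ^ 2 * C₀ * (x ^ (l - 1) * gaussDens σ x)) := by
          apply mul_le_mul_of_nonneg_left hKey
          have := gauss_pos hσ x; positivity
      _ = 2 * C₀ * x ^ (l - 1) := halg x hpos
  · -- x < 0
    have hxx : |x| = -x := abs_of_neg hx0
    set y : ℝ := -x with hydef
    rw [hxx] at hy1 hyR hy2 ⊢
    have hpos : 0 < y := lt_of_lt_of_le one_pos hy1
    have hgeq : gaussDens σ x = gaussDens σ y := by
      rw [show x = -y by rw [hydef]; ring, gauss_even]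
    have htransfer : (∫ t in Set.Iio x, h t * gaussDens σ t) =
        ∫ s in Set.Ioi y, h (-s) * gaussDens σ s := by
      calc (∫ t in Set.Iio x, h t * gaussDens σ t)
          = ∫ t in Set.Iic x, h t * gaussDens σ t := (integral_Iic_eq_integral_Iio).symm
        _ = ∫ t in Set.Iic x, (fun s => h (-s) * gaussDens σ s) (-t) := by
            refine setIntegral_congr_fun measurableSet_Iic fun t _ => ?_
            simp only [neg_neg, gauss_even]
        _ = ∫ s in Set.Ioi (-x), h (-s) * gaussDens σ s :=
            integral_comp_neg_Iic x (fun s => h (-s) * gaussDens σ s)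
    have hbnd : ∀ t, y ≤ t → |h (-t)| ≤ C₀ * t ^ l := by
      intro t ht
      have ht0 : 0 < t := hpos.trans_le ht
      have htt : |(-t)| = t := by rw [abs_neg, abs_of_pos ht0]
      have := hCb (-t) (by rw [htt]; exact hyR.trans ht)
      rw [htt] at this
      exact this.trans (mul_le_mul_of_nonneg_right hCC₀ (Real.rpow_nonneg ht0.le l))
    have hKey := keyBound hσ hC₀ hy1 hy2 (hmeas.comp measurable_neg) hbnd
    unfold tildeF
    rw [if_neg (not_le.mpr hx0), hgeq, htransfer, abs_mul, abs_of_pos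
      (show (0:ℝ) < 1 / (σ ^ 2 * gaussDens σ y) by
        have := gauss_pos hσ y; positivity)]
    calc 1 / (σ ^ 2 * gaussDens σ y) * |∫ s in Set.Ioi y, h (-s) * gaussDens σ s|
        ≤ 1 / (σ ^ 2 * gaussDens σ y) * (2 * σ ^ 2 * C₀ * (y ^ (l - 1) * gaussDens σ y)) := by
          apply mul_le_mul_of_nonneg_left hKey
          have := gauss_pos hσ y; positivity
      _ = 2 * C₀ * y ^ (l - 1) := halg y hpos
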